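/- (Baer) The intersection of all maximal nilpotent subgroups of a finite group G equals the hypercenter of G. -/

import Mathlib

open Subgroup

section Aux
variable {G : Type*} [Group G]

lemma baer_decomp (g : G) {u v : ℕ} (h : orderOf g = u * v) (huv : Nat.Coprime u v) :
    ∃ a ∈ Subgroup.zpowers g, ∃ b ∈ Subgroup.zpowers g, g = a * b ∧ a ^ u = 1 ∧ b ^ v = 1 := by
  have hco : IsCoprime (u : ℤ) (v : ℤ) := Int.isCoprime_iff_gcd_eq_one.mpr (by
    simpa [Int.gcd] using huv)
  obtain ⟨s, t, hst⟩ := hco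
  have hguv : g ^ ((u : ℤ) * v) = 1 := by
    rw [show ((u : ℤ) * v) = ((u * v : ℕ) : ℤ) by push_cast; ring, zpow_natCast, ← h,
      pow_orderOf_eq_one]
  refine ⟨g ^ ((v : ℤ) * t), ⟨_, rfl⟩, g ^ ((u : ℤ) * s), ⟨_, rfl⟩, ?_, ?_, ?_⟩
  · rw [← zpow_add, show (v : ℤ) * t + (u : ℤ) * s = 1 by linarith, zpow_one]
  · rw [← zpow_natCast (g ^ ((v : ℤ) * t)) u, ← zpow_mul,
      show (v : ℤ) * t * u = (u : ℤ) * v * t by ring, zpow_mul, hguv, one_zpow]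
  · rw [← zpow_natCast (g ^ ((u : ℤ) * s)) v, ← zpow_mul,
      show (u : ℤ) * s * v = (u : ℤ) * v * s by ring, zpow_mul, hguv, one_zpow]

/-- Every element lies in a subgroup containing all its prime-power-order powers. -/
lemma baer_pp [Finite G] (H : Subgroup G) (g : G)
    (hg : ∀ x ∈ Subgroup.zpowers g, ∀ p k : ℕ, p.Prime → orderOf x = p ^ k → x ∈ H) :
    g ∈ H := by
  have main : ∀ n (g : G), orderOf g = n →
      (∀ x ∈ Subgroup.zpowers g, ∀ p k : ℕ, p.Prime → orderOf x = p ^ k → x ∈ H) → g ∈ H := by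
    intro n
    induction n using Nat.strong_induction_on with
    | _ n ih =>
      intro g hn hg
      have hn0 : n ≠ 0 := by
        rw [← hn]; exact (orderOf_pos g).ne'
      by_cases hn1 : n = 1
      · have : g = 1 := orderOf_eq_one_iff.mp (hn ▸ hn1)
        exact this ▸ H.one_mem
      set p := n.minFac with hpdef
      have hp : p.Prime := Nat.minFac_prime hn1
      set u := p ^ n.factorization p with hudef
      set v := n / u with hvdef
      have huv : u * v = n := Nat.ordProj_mul_ordCompl_eq_self n p
      have hcop : Nat.Coprime u v := Nat.Coprime.pow_left _ (Nat.coprime_ordCompl hp hn0)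
      obtain ⟨a, ha, b, hb, hab, hau, hbv⟩ := baer_decomp g (by rw [hn, huv]) hcop
      have hbH : b ∈ H := by
        have hv0 : v ≠ 0 := by
          intro h0
          exact hn0 (by rw [← huv, h0, mul_zero])
        have hvn : v < n := by
          apply Nat.div_lt_self (Nat.pos_of_ne_zero hn0)
          have : 1 ≤ n.factorization p := (hp.factorization_pos_of_dvd hn0 (Nat.minFac_dvd n))
          calc 1 < p := hp.one_lt
          _ ≤ u := Nat.le_self_pow (by omega) p
        have hbord : orderOf b ∣ v := orderOf_dvd_of_pow_eq_one hbv
        have hblt : orderOf b < n := lt_of_le_of_lt (Nat.le_of_dvd (Nat.pos_of_ne_zero hv0) hbord) hvn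
        exact ih (orderOf b) hblt b rfl (fun x hx => hg x (le_trans (zpowers_le.mpr hb) le_rfl hx))
      have haH : a ∈ H := by
        have : orderOf a ∣ u := orderOf_dvd_of_pow_eq_one hau
        obtain ⟨j, _, hj⟩ := (Nat.dvd_prime_pow hp).mp this
        exact hg a ha p j hp hj
      exact hab ▸ H.mul_mem haH hbH
  exact main (orderOf g) g rfl hg

end Aux

section Aux2
variable {G : Type*} [Group G]

lemma baer_zpowers_pgroup {x : G} {p k : ℕ} (h : x ^ p ^ k = 1) :
    IsPGroup p (Subgroup.zpowers x) := by
  rintro ⟨y, m, rfl⟩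
  exact ⟨k, Subtype.ext (by
    show ((x ^ m) ^ p ^ k : G) = 1
    rw [← zpow_natCast (x ^ m) (p ^ k), ← zpow_mul, mul_comm, zpow_mul, zpow_natCast, h,
      one_zpow])⟩

/-- In a finite nilpotent group, elements of coprime prime-power orders commute. -/
lemma baer_comm {H : Type*} [Group H] [Finite H] (hH : Group.IsNilpotent H)
    {p q : ℕ} (hp : p.Prime) (hq : q.Prime) (hpq : p ≠ q) {x y : H}
    {a b : ℕ} (hx : x ^ p ^ a = 1) (hy : y ^ q ^ b = 1) : Commute x y := by
  haveI := Fact.mk hp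
  haveI := Fact.mk hq
  have hsyl := ((isNilpotent_of_finite_tfae (G := H)).out 0 3).mp hH
  obtain ⟨P, hP⟩ := (baer_zpowers_pgroup hx).exists_le_sylow
  obtain ⟨Q, hQ⟩ := (baer_zpowers_pgroup hy).exists_le_sylow
  have hPn : (P : Subgroup H).Normal := hsyl p (Fact.mk hp) P
  have hQn : (Q : Subgroup H).Normal := hsyl q (Fact.mk hq) Q
  have hxP : x ∈ (P : Subgroup H) := hP (mem_zpowers x)
  have hyQ : y ∈ (Q : Subgroup H) := hQ (mem_zpowers y)
  set z := x * y * x⁻¹ * y⁻¹ with hz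
  have hzP : z ∈ (P : Subgroup H) := by
    have : y * x⁻¹ * y⁻¹ ∈ (P : Subgroup H) := by
      simpa [mul_assoc] using hPn.conj_mem x⁻¹ (P.1.inv_mem hxP) y
    have h2 := P.1.mul_mem hxP this
    rw [hz]
    convert h2 using 1
    group
  have hzQ : z ∈ (Q : Subgroup H) := by
    have : x * y * x⁻¹ ∈ (Q : Subgroup H) := hQn.conj_mem y hyQ x
    have h2 := Q.1.mul_mem this (Q.1.inv_mem hyQ)
    rw [hz]
    convert h2 using 1
  obtain ⟨i, hi⟩ := P.2 ⟨z, hzP⟩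
  obtain ⟨j, hj⟩ := Q.2 ⟨z, hzQ⟩
  have hzi : z ^ p ^ i = 1 := by simpa [Subtype.ext_iff] using hi
  have hzj : z ^ q ^ j = 1 := by simpa [Subtype.ext_iff] using hj
  have hz1 : z = 1 := by
    have h1 : orderOf z ∣ p ^ i := orderOf_dvd_of_pow_eq_one hzi
    have h2 : orderOf z ∣ q ^ j := orderOf_dvd_of_pow_eq_one hzj
    have hco : Nat.Coprime (p ^ i) (q ^ j) :=
      ((Nat.coprime_primes hp hq).mpr hpq).pow i j
    have : orderOf z = 1 := Nat.eq_one_of_dvd_coprimes hco h1 h2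
    simpa [orderOf_eq_one_iff] using this
  have h3 : x * y * x⁻¹ * y⁻¹ = 1 := hz ▸ hz1
  exact commutatorElement_eq_one_iff_commute.mp (by rw [commutatorElement_def]; exact h3)

end Aux2

section Aux3
variable {G : Type*} [Group G]

lemma baer_centralizer_normal {P : Subgroup G} (hP : P.Normal) :
    (Subgroup.centralizer (P : Set G)).Normal := by
  constructor
  intro c hc g
  rw [Subgroup.mem_centralizer_iff] at hc ⊢
  intro x hx
  have hx' : g⁻¹ * x * g ∈ P := by simpa using hP.conj_mem x hx g⁻¹
  have := hc _ hx'
  have goal : x * (g * c * g⁻¹) = (g * c * g⁻¹) * x := by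
    have h1 : g⁻¹ * x * g * c = c * (g⁻¹ * x * g) := this
    calc x * (g * c * g⁻¹) = g * ((g⁻¹ * x * g) * c) * g⁻¹ := by group
    _ = g * (c * (g⁻¹ * x * g)) * g⁻¹ := by rw [h1]
    _ = (g * c * g⁻¹) * x := by group
  exact goal

/-- Lifting the upper central series along a quotient by a central subgroup. -/
lemma baer_lift (K : Subgroup G) [hKn : K.Normal] (hK : K ≤ Subgroup.center G) :
    ∀ i : ℕ, Subgroup.comap (QuotientGroup.mk' K) (Subgroup.upperCentralSeries (G ⧸ K) i) ≤
      Subgroup.upperCentralSeries G (i + 1) := by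
  intro i
  induction i with
  | zero =>
    rw [Subgroup.upperCentralSeries_zero]
    intro x hx
    have : x ∈ K := by
      simpa [QuotientGroup.eq_one_iff] using hx
    rw [show (0 + 1 : ℕ) = 1 from rfl, Subgroup.upperCentralSeries_one]
    exact hK this
  | succ i ih =>
    intro x hx
    rw [Subgroup.mem_upperCentralSeries_succ_iff]
    intro y
    apply ih
    have hx' := Subgroup.mem_upperCentralSeries_succ_iff.mp hx (QuotientGroup.mk' K y)
    simpa using hx'

lemma baer_stab [Finite G] : ∃ n : ℕ, (⨆ k, Subgroup.upperCentralSeries G k) = Subgroup.upperCentralSeries G n := by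
  have hfin : (Set.range (Subgroup.upperCentralSeries G)).Finite := Set.toFinite _
  obtain ⟨M, ⟨n, rfl⟩, hmax⟩ := Set.Finite.exists_maximal hfin (Set.range_nonempty _)
  refine ⟨n, le_antisymm (iSup_le fun k => ?_) (le_iSup _ n)⟩
  have h1 : Subgroup.upperCentralSeries G n ≤ Subgroup.upperCentralSeries G (max n k) :=
    Subgroup.upperCentralSeries_mono G (le_max_left n k)
  have h2 := le_antisymm h1 (hmax ⟨max n k, rfl⟩ h1)
  calc Subgroup.upperCentralSeries G k ≤ Subgroup.upperCentralSeries G (max n k) :=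
    Subgroup.upperCentralSeries_mono G (le_max_right n k)
  _ = Subgroup.upperCentralSeries G n := by
    have h3 : Subgroup.upperCentralSeries G n = Subgroup.upperCentralSeries G (max n k) := by simpa using h2
    exact h3.symm

end Aux3

section Aux4
universe u

/-- A nilpotent subgroup joined with a term of the upper central series is nilpotent. -/
lemma baer_sup_nilp : ∀ (n : ℕ) (G : Type u) [Group G] [Finite G] (U : Subgroup G),
    Group.IsNilpotent U → Group.IsNilpotent ↥(U ⊔ Subgroup.upperCentralSeries G n) := by
  intro n
  induction n with
  | zero =>
    intro G _ _ U hU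
    rw [Subgroup.upperCentralSeries_zero, sup_bot_eq]
    exact hU
  | succ n ih =>
    intro G _ _ U hU
    set Z := Subgroup.center G with hZ
    set f := QuotientGroup.mk' Z with hf
    set M := U ⊔ Subgroup.upperCentralSeries G (n + 1) with hM
    have hmapU : Group.IsNilpotent ↥(Subgroup.map f U) := by
      haveI := hU
      exact nilpotent_of_surjective (f.subgroupMap U) (f.subgroupMap_surjective U)
    set W := Subgroup.map f U ⊔ Subgroup.upperCentralSeries (G ⧸ Z) n with hW
    have hWnil : Group.IsNilpotent ↥W := ih (G ⧸ Z) (Subgroup.map f U) hmapU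
    have hmap : Subgroup.map f M = W := by
      rw [hM, Subgroup.map_sup, hW]
      congr 1
      rw [← Subgroup.comap_upperCentralSeries_quotient_center n,
        Subgroup.map_comap_eq_self_of_surjective (QuotientGroup.mk'_surjective Z)]
    have hmem : ∀ m : ↥M, (f.comp M.subtype) m ∈ W := fun m =>
      hmap ▸ Subgroup.mem_map_of_mem f m.2
    set g : ↥M →* ↥W := (f.comp M.subtype).codRestrict W hmem with hg
    haveI := hWnil
    apply Subgroup.isNilpotent_of_ker_le_center g _
    intro m hm
    have h1 : f (m : G) = 1 := by
      have := congrArg Subtype.val (MonoidHom.mem_ker.mp hm)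
      simpa [hg] using this
    have h2 : (m : G) ∈ Z := by
      rwa [QuotientGroup.mk'_apply, QuotientGroup.eq_one_iff] at h1
    rw [Subgroup.mem_center_iff]
    intro m'
    exact Subtype.ext ((Subgroup.mem_center_iff.mp h2) m')

end Aux4

section AuxKey
universe u

lemma baer_inf_normal {G : Type u} [Group G] {P : Subgroup G} (hP : P.Normal) :
    (P ⊓ Subgroup.center G).Normal := by
  constructor
  intro n hn g
  refine ⟨hP.conj_mem n hn.1 g, ?_⟩
  have hz := hn.2
  have h1 : g * n = n * g := (Subgroup.mem_center_iff.mp hz) g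
  have : g * n * g⁻¹ = n := by rw [h1]; group
  rwa [this]

lemma baer_key : ∀ (k : ℕ) (G : Type u) [Group G] [Finite G] (p : ℕ), p.Prime →
    ∀ P : Subgroup G, Nat.card ↥P ≤ k → P.Normal → IsPGroup p ↥P →
    ∀ [inst : (Subgroup.centralizer ((P : Subgroup G) : Set G)).Normal],
    IsPGroup p (G ⧸ Subgroup.centralizer ((P : Subgroup G) : Set G)) →
    P ≤ ⨆ n, Subgroup.upperCentralSeries G n := by
  intro k
  induction k with
  | zero =>
    intro G _ _ p hp P hcard _ _ _ _
    have := Nat.card_pos (α := ↥P)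
    omega
  | succ k ih =>
    intro G _ _ p hp P hcard hPn hPp hCn hC
    haveI := Fact.mk hp
    by_cases hbot : P = ⊥
    · exact hbot ▸ bot_le
    have hgt1 : 1 < Nat.card ↥P := (Subgroup.one_lt_card_iff_ne_bot P).mpr hbot
    haveI := hPn
    -- set up the conjugation action of G ⧸ centralizer P on P
    have hconj_c : ∀ c ∈ Subgroup.centralizer ((P : Subgroup G) : Set G),
        MulAut.conjNormal (H := P) c = 1 := by
      intro c hc
      ext x
      show c * (x : G) * c⁻¹ = (x : G)
      have := (Subgroup.mem_centralizer_iff.mp hc) (x : G) x.2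
      rw [← this]; group
    set φ : (G ⧸ Subgroup.centralizer ((P : Subgroup G) : Set G)) →* MulAut ↥P :=
      QuotientGroup.lift _ MulAut.conjNormal hconj_c with hφ
    letI : MulAction (G ⧸ Subgroup.centralizer ((P : Subgroup G) : Set G)) ↥P :=
      MulAction.compHom _ φ
    have hsmul : ∀ (g : G) (x : ↥P),
        ((QuotientGroup.mk g : G ⧸ Subgroup.centralizer ((P : Subgroup G) : Set G)) • x : ↥P)
          = MulAut.conjNormal g x := fun g x => rfl
    have hfix : ∀ x : ↥P,
        x ∈ MulAction.fixedPoints (G ⧸ Subgroup.centralizer ((P : Subgroup G) : Set G)) ↥P ↔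
        (x : G) ∈ Subgroup.center G := by
      intro x
      rw [MulAction.mem_fixedPoints]
      constructor
      · intro hx
        rw [Subgroup.mem_center_iff]
        intro g
        have h1 := hx (QuotientGroup.mk g)
        rw [hsmul] at h1
        have h2 : g * (x : G) * g⁻¹ = (x : G) := by
          have := congrArg Subtype.val h1
          simpa [MulAut.conjNormal_apply] using this
        calc g * (x : G) = (g * x * g⁻¹) * g := by group
        _ = (x : G) * g := by rw [h2]
      · intro hx m
        induction m using QuotientGroup.induction_on with
        | H g =>
          rw [hsmul]
          apply Subtype.ext
          show g * (x : G) * g⁻¹ = (x : G)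
          rw [(Subgroup.mem_center_iff.mp hx) g]
          group
    -- fixed point counting
    have hmod := hC.card_modEq_card_fixedPoints (↥P)
    have hpdvd : p ∣ Nat.card ↥P := by
      obtain ⟨n, hn⟩ := IsPGroup.iff_card.mp hPp
      rcases n with _ | n
      · simp [hn] at hgt1
      · exact hn ▸ dvd_pow_self p (Nat.succ_ne_zero n)
    have hfixdvd : p ∣ Nat.card
        (MulAction.fixedPoints (G ⧸ Subgroup.centralizer ((P : Subgroup G) : Set G)) ↥P) := by
      have h0 : Nat.card ↥P ≡ 0 [MOD p] := (Nat.modEq_zero_iff_dvd).mpr hpdvd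
      exact (Nat.modEq_zero_iff_dvd).mp (hmod.symm.trans h0)
    have h1fix : (1 : ↥P) ∈ MulAction.fixedPoints
        (G ⧸ Subgroup.centralizer ((P : Subgroup G) : Set G)) ↥P :=
      (hfix 1).mpr (by simpa using Subgroup.one_mem (Subgroup.center G))
    have hfixpos : 0 < Nat.card
        (MulAction.fixedPoints (G ⧸ Subgroup.centralizer ((P : Subgroup G) : Set G)) ↥P) :=
      Nat.card_pos_iff.mpr ⟨⟨⟨1, h1fix⟩⟩, inferInstance⟩
    have hfixgt1 : 1 < Nat.card
        (MulAction.fixedPoints (G ⧸ Subgroup.centralizer ((P : Subgroup G) : Set G)) ↥P) := by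
      have h2 := hp.two_le
      have h3 := Nat.le_of_dvd hfixpos hfixdvd
      omega
    haveI : Nontrivial
        ↥(MulAction.fixedPoints (G ⧸ Subgroup.centralizer ((P : Subgroup G) : Set G)) ↥P) :=
      Finite.one_lt_card_iff_nontrivial.mp hfixgt1
    obtain ⟨y, hy⟩ := exists_ne (⟨(1 : ↥P), h1fix⟩ :
      ↥(MulAction.fixedPoints (G ⧸ Subgroup.centralizer ((P : Subgroup G) : Set G)) ↥P))
    set x0 : ↥P := y.1 with hx0
    have hx0fix := y.2
    have hx0ne : x0 ≠ 1 := fun h => hy (Subtype.ext h)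
    have hx0c : (x0 : G) ∈ Subgroup.center G := (hfix x0).mp hx0fix
    -- quotient by K = P ⊓ Z(G)
    set K := P ⊓ Subgroup.center G with hK
    haveI hKn : K.Normal := baer_inf_normal hPn
    set π := QuotientGroup.mk' K with hπ
    set P' := Subgroup.map π P with hP'
    haveI hP'n : P'.Normal := hPn.map π (QuotientGroup.mk'_surjective K)
    have hP'p : IsPGroup p ↥P' := hPp.map π
    -- cardinality decreases
    set s := π.subgroupMap P with hs
    have hssurj : Function.Surjective s := π.subgroupMap_surjective P
    have hx0K : (x0 : G) ∈ K := ⟨x0.2, hx0c⟩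
    have hx0ker : x0 ∈ s.ker := by
      rw [MonoidHom.mem_ker]
      apply Subtype.ext
      show π (x0 : G) = 1
      rw [hπ, QuotientGroup.mk'_apply, QuotientGroup.eq_one_iff]
      exact hx0K
    have hkerbot : s.ker ≠ ⊥ := by
      intro h
      rw [h, Subgroup.mem_bot] at hx0ker
      exact hx0ne hx0ker
    have hkergt1 : 1 < Nat.card ↥s.ker := (Subgroup.one_lt_card_iff_ne_bot s.ker).mpr hkerbot
    have hcard_eq : Nat.card ↥P = Nat.card (↥P ⧸ s.ker) * Nat.card ↥s.ker :=
      Subgroup.card_eq_card_quotient_mul_card_subgroup s.ker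
    have hquot_eq : Nat.card (↥P ⧸ s.ker) = Nat.card ↥P' :=
      Nat.card_congr (QuotientGroup.quotientKerEquivOfSurjective s hssurj).toEquiv
    have hP'pos : 0 < Nat.card ↥P' := Nat.card_pos
    have hcardlt : Nat.card ↥P' < Nat.card ↥P := by
      rw [hcard_eq, hquot_eq]
      nlinarith
    -- the centralizer condition in the quotient
    haveI hC'n : (Subgroup.centralizer ((P' : Subgroup (G ⧸ K)) : Set (G ⧸ K))).Normal :=
      baer_centralizer_normal hP'n
    have hcent : ∀ c ∈ Subgroup.centralizer ((P : Subgroup G) : Set G),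
        ((QuotientGroup.mk' (Subgroup.centralizer ((P' : Subgroup (G ⧸ K)) : Set (G ⧸ K)))).comp
          π) c = 1 := by
      intro c hc
      rw [MonoidHom.comp_apply, QuotientGroup.mk'_apply, QuotientGroup.eq_one_iff]
      rw [Subgroup.mem_centralizer_iff]
      rintro w ⟨y, hyP, rfl⟩
      show π y * π c = π c * π y
      rw [← map_mul, ← map_mul, (Subgroup.mem_centralizer_iff.mp hc) y hyP]
    set ψ := QuotientGroup.lift (Subgroup.centralizer ((P : Subgroup G) : Set G))
      ((QuotientGroup.mk' (Subgroup.centralizer ((P' : Subgroup (G ⧸ K)) : Set (G ⧸ K)))).comp π)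
      hcent with hψ
    have hψsurj : Function.Surjective ψ := by
      intro z
      obtain ⟨w, rfl⟩ := QuotientGroup.mk'_surjective _ z
      obtain ⟨g, rfl⟩ := QuotientGroup.mk'_surjective K w
      exact ⟨QuotientGroup.mk g, rfl⟩
    have hC' : IsPGroup p ((G ⧸ K) ⧸
        Subgroup.centralizer ((P' : Subgroup (G ⧸ K)) : Set (G ⧸ K))) :=
      hC.of_surjective ψ hψsurj
    -- apply induction hypothesis
    have hP'le : P' ≤ ⨆ n, Subgroup.upperCentralSeries (G ⧸ K) n :=
      ih (G ⧸ K) p hp P' (by omega) hP'n hP'p hC'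
    obtain ⟨m, hm⟩ := baer_stab (G := G ⧸ K)
    intro x hx
    have hx' : π x ∈ Subgroup.upperCentralSeries (G ⧸ K) m := by
      rw [← hm]
      exact hP'le (Subgroup.mem_map_of_mem π hx)
    have : x ∈ Subgroup.upperCentralSeries G (m + 1) :=
      baer_lift K inf_le_right m hx'
    exact (le_iSup (Subgroup.upperCentralSeries G) (m + 1)) this

end AuxKey

section AuxMain
universe u
variable {G : Type u} [Group G] [Finite G]

lemma baer_exists_max (V : Subgroup G) (hV : Group.IsNilpotent ↥V) :
    ∃ U : Subgroup G,
      (Group.IsNilpotent ↥U ∧ ∀ W : Subgroup G, Group.IsNilpotent ↥W → U ≤ W → U = W) ∧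
      V ≤ U := by
  classical
  obtain ⟨U, hU, hmax⟩ := Set.Finite.exists_maximal (Set.toFinite {W : Subgroup G | Group.IsNilpotent ↥W ∧ V ≤ W
    }) ⟨V, hV, le_rfl⟩
  exact ⟨U, ⟨hU.1, fun W hW hle => le_antisymm hle (hmax ⟨hW, le_trans hU.2 hle⟩ hle)⟩, hU.2⟩

lemma baer_main (N : Subgroup G) (hNn : N.Normal) (hNnil : Group.IsNilpotent ↥N)
    (hN : ∀ U : Subgroup G,
      (Group.IsNilpotent ↥U ∧ ∀ V : Subgroup G, Group.IsNilpotent ↥V → U ≤ V → U = V) →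
      N ≤ U) :
    N ≤ ⨆ n, Subgroup.upperCentralSeries G n := by
  intro g hg
  apply baer_pp _ g
  intro x hxz p k hp hord
  have hxN : x ∈ N := (Subgroup.zpowers_le.mpr hg) hxz
  haveI := Fact.mk hp
  have hxpow : x ^ p ^ k = 1 := hord ▸ pow_orderOf_eq_one x
  have hx'pow : (⟨x, hxN⟩ : ↥N) ^ p ^ k = 1 := Subtype.ext (by simpa using hxpow)
  obtain ⟨P₀, hP₀⟩ := (baer_zpowers_pgroup hx'pow).exists_le_sylow
  have hsyl := ((isNilpotent_of_finite_tfae (G := ↥N)).out 0 3).mp hNnil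
  have hP₀n : (P₀ : Subgroup ↥N).Normal := hsyl p (Fact.mk hp) P₀
  haveI := Sylow.unique_of_normal P₀ hP₀n
  set P := Subgroup.map N.subtype (P₀ : Subgroup ↥N) with hPdef
  have hPmem : ∀ y : G, y ∈ P ↔ y ∈ N ∧ ∃ j : ℕ, y ^ p ^ j = 1 := by
    intro y
    constructor
    · rintro ⟨z, hz, rfl⟩
      refine ⟨z.2, ?_⟩
      obtain ⟨j, hj⟩ := P₀.2 ⟨z, hz⟩
      refine ⟨j, ?_⟩
      have := congrArg (Subtype.val ∘ Subtype.val) hj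
      simpa using this
    · rintro ⟨hyN, j, hj⟩
      have h' : (⟨y, hyN⟩ : ↥N) ^ p ^ j = 1 := Subtype.ext (by simpa using hj)
      obtain ⟨Q, hQ⟩ := (baer_zpowers_pgroup h').exists_le_sylow
      have hQP : Q = P₀ := Subsingleton.elim Q P₀
      exact ⟨⟨y, hyN⟩, (hQP ▸ hQ) (Subgroup.mem_zpowers _), rfl⟩
  have hxP : x ∈ P := (hPmem x).mpr ⟨hxN, k, hxpow⟩
  have hPN : P ≤ N := by
    rintro y ⟨z, hz, rfl⟩
    exact z.2
  have hPnorm : P.Normal := by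
    constructor
    intro y hy g0
    rw [hPmem] at hy ⊢
    obtain ⟨hyN, j, hj⟩ := hy
    refine ⟨hNn.conj_mem y hyN g0, j, ?_⟩
    have h1 : (g0 * y * g0⁻¹) ^ p ^ j = g0 * y ^ p ^ j * g0⁻¹ := by
      have := map_pow (MulAut.conj g0) y (p ^ j)
      simpa [MulAut.conj_apply] using this.symm
    rw [h1, hj, mul_one, mul_inv_cancel]
  have hPp : IsPGroup p ↥P := by
    rintro ⟨y, hy⟩
    obtain ⟨-, j, hj⟩ := (hPmem y).mp hy
    exact ⟨j, Subtype.ext (by simpa using hj)⟩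
  haveI hCn := baer_centralizer_normal hPnorm
  have hC : IsPGroup p (G ⧸ Subgroup.centralizer (P : Set G)) := by
    intro gq
    obtain ⟨g0, rfl⟩ := QuotientGroup.mk'_surjective _ gq
    have hn0pos : orderOf g0 ≠ 0 := (orderOf_pos g0).ne'
    obtain ⟨a, ha, b, hb, hab, hau, hbv⟩ := baer_decomp g0
      (Nat.ordProj_mul_ordCompl_eq_self (orderOf g0) p).symm
      (Nat.Coprime.pow_left _ (Nat.coprime_ordCompl hp hn0pos))
    have hbC : b ∈ Subgroup.centralizer (P : Set G) := by
      apply baer_pp _ b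
      intro w hw q j hq hqord
      by_cases hqp : q = p
      · subst hqp
        have hwv : w ^ (ordCompl[q] (orderOf g0)) = 1 := by
          obtain ⟨m, rfl⟩ := hw
          rw [← zpow_natCast, ← zpow_mul, mul_comm, zpow_mul, zpow_natCast, hbv, one_zpow]
        have hdvd : orderOf w ∣ ordCompl[q] (orderOf g0) := orderOf_dvd_of_pow_eq_one hwv
        rw [hqord] at hdvd
        have hco : Nat.Coprime (q ^ j) (ordCompl[q] (orderOf g0)) :=
          Nat.Coprime.pow_left _ (Nat.coprime_ordCompl hq hn0pos)
        have hq1 : q ^ j = 1 := hco.eq_one_of_dvd hdvd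
        have hw1 : w = 1 := by
          rw [← pow_one w, ← hq1, ← hqord, pow_orderOf_eq_one]
        exact hw1 ▸ Subgroup.one_mem _
      · rw [Subgroup.mem_centralizer_iff]
        intro z hz
        have hwq : w ^ q ^ j = 1 := hqord ▸ pow_orderOf_eq_one w
        have hwnil : Group.IsNilpotent ↥(Subgroup.zpowers w) := by
          haveI := Fact.mk hq
          exact (baer_zpowers_pgroup hwq).isNilpotent
        obtain ⟨U, hU, hwU⟩ := baer_exists_max _ hwnil
        have hzU : z ∈ U := hN U hU (hPN hz)
        have hwU' : w ∈ U := hwU (Subgroup.mem_zpowers w)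
        obtain ⟨-, jz, hjz⟩ := (hPmem z).mp hz
        have hcomm : Commute (⟨z, hzU⟩ : ↥U) ⟨w, hwU'⟩ := by
          apply baer_comm hU.1 hp hq (Ne.symm hqp) (a := jz) (b := j)
          · exact Subtype.ext (by simpa using hjz)
          · exact Subtype.ext (by simpa using hwq)
        have := congrArg Subtype.val hcomm
        simpa using this
    refine ⟨(orderOf g0).factorization p, ?_⟩
    have hba : (QuotientGroup.mk' (Subgroup.centralizer (P : Set G))) g0
        = (QuotientGroup.mk' (Subgroup.centralizer (P : Set G))) a := by
      have hb1 : (QuotientGroup.mk' (Subgroup.centralizer (P : Set G))) b = 1 := by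
        rw [QuotientGroup.mk'_apply, QuotientGroup.eq_one_iff]
        exact hbC
      rw [hab, map_mul, hb1, mul_one]
    rw [hba, ← map_pow, hau, map_one]
  have hkey := baer_key (Nat.card ↥P) G p hp P le_rfl hPnorm hPp hC
  exact hkey hxP

end AuxMain

/-- (Baer) The intersection of all maximal nilpotent subgroups of a finite group `G`
equals the hypercenter of `G` (the terminal member of the upper central series). -/
theorem stmt_1 (G : Type*) [Group G] [Finite G] :
    sInf {U : Subgroup G | Group.IsNilpotent U ∧
        ∀ V : Subgroup G, Group.IsNilpotent V → U ≤ V → U = V} =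
      ⨆ n : ℕ, _root_.upperCentralSeries G n := by
  set S := {U : Subgroup G | Group.IsNilpotent U ∧
      ∀ V : Subgroup G, Group.IsNilpotent V → U ≤ V → U = V} with hSdef
  have hcomp : ∀ (h : G) (W : Subgroup G),
      Subgroup.map (MulAut.conj h⁻¹).toMonoidHom
        (Subgroup.map (MulAut.conj h).toMonoidHom W) = W := by
    intro h W
    rw [Subgroup.map_map]
    have : (MulAut.conj h⁻¹).toMonoidHom.comp (MulAut.conj h).toMonoidHom = MonoidHom.id G := by
      ext x
      simp [MulAut.conj_apply]
      group
    rw [this, Subgroup.map_id]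
  have hconjnil : ∀ (g : G) (W : Subgroup G), Group.IsNilpotent ↥W →
      Group.IsNilpotent ↥(Subgroup.map (MulAut.conj g).toMonoidHom W) := by
    intro g W hW
    haveI := hW
    exact nilpotent_of_mulEquiv ((MulAut.conj g).subgroupMap W)
  have hconjS : ∀ (g : G), ∀ U ∈ S, Subgroup.map (MulAut.conj g).toMonoidHom U ∈ S := by
    intro g U hU
    refine ⟨hconjnil g U hU.1, ?_⟩
    intro V hV hle
    have h1 : U ≤ Subgroup.map (MulAut.conj g⁻¹).toMonoidHom V := by
      have := Subgroup.map_mono (f := (MulAut.conj g⁻¹).toMonoidHom) hle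
      rwa [hcomp g U] at this
    have h2 : U = Subgroup.map (MulAut.conj g⁻¹).toMonoidHom V :=
      hU.2 _ (hconjnil g⁻¹ V hV) h1
    have h3 := hcomp g⁻¹ V
    rw [inv_inv] at h3
    rw [h2, h3]
  apply le_antisymm
  · have hbotnil : Group.IsNilpotent ↥(⊥ : Subgroup G) := by infer_instance
    obtain ⟨U₀, hU₀, -⟩ := baer_exists_max (⊥ : Subgroup G) hbotnil
    have hD_le : sInf S ≤ U₀ := sInf_le hU₀
    have hDnil : Group.IsNilpotent ↥(sInf S) := by
      haveI := hU₀.1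
      haveI : Group.IsNilpotent ↥((sInf S).subgroupOf U₀) := Subgroup.isNilpotent _
      exact nilpotent_of_mulEquiv (Subgroup.subgroupOfEquivOfLe hD_le)
    have hDnormal : (sInf S).Normal := by
      constructor
      intro n hn g
      rw [Subgroup.mem_sInf] at hn ⊢
      intro U hU
      obtain ⟨u, huU, hu⟩ := hn _ (hconjS g⁻¹ U hU)
      have : g * n * g⁻¹ = u := by
        rw [← hu]
        simp [MulAut.conj_apply]
        group
      exact this ▸ huU
    exact baer_main _ hDnormal hDnil (fun U hU => sInf_le hU)
  · apply le_sInf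
    intro U hU
    apply iSup_le
    intro n
    have hnil := baer_sup_nilp n G U hU.1
    have heq := hU.2 _ hnil le_sup_left
    calc Subgroup.upperCentralSeries G n ≤ U ⊔ Subgroup.upperCentralSeries G n := le_sup_right
    _ = U := heq.symm
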